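/- Let n ≥ 2 be a natural number and let λ > 0, λ_e > 0, c > 0 be real numbers. Let v : ℕ → ℝ satisfy, for every j with 1 ≤ j ≤ n, the recursion v(j) = (λ_e + j(n−j)·(λ/(n−1) + λ/c)·v(j+1)) / (j·λ/n + j·λ/c + j(n−j)·(λ/(n−1) + λ/c)). Then v(1) ≤ 2·c·λ_e·(ln n + 1)/(λ·n) + c·λ_e/(λ·(c + n)). -/

import Mathlib

set_option maxHeartbeats 1000000

/-- Upper bound on the average version age of a single node in a fully connected
gossip network with constant contact-mobility scaling `f(n) = c`. -/
theorem stmt_6 (n : ℕ) (hn : 2 ≤ n) (lam lamE c : ℝ) (hlam : 0 < lam) (hlamE : 0 < lamE)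
    (hc : 0 < c) (v : ℕ → ℝ)
    (hv : ∀ j : ℕ, 1 ≤ j → j ≤ n →
      v j = (lamE + (j : ℝ) * ((n : ℝ) - j) * (lam / ((n : ℝ) - 1) + lam / c) * v (j + 1)) /
        ((j : ℝ) * lam / n + (j : ℝ) * lam / c
          + (j : ℝ) * ((n : ℝ) - j) * (lam / ((n : ℝ) - 1) + lam / c))) :
    v 1 ≤ 2 * c * lamE * (Real.log n + 1) / (lam * n)
        + c * lamE / (lam * (c + n)) := by
  have hn2 : (2:ℝ) ≤ (n:ℝ) := by exact_mod_cast hn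
  have hn1 : (1:ℝ) ≤ (n:ℝ) - 1 := by linarith
  have hnpos : (0:ℝ) < n := by linarith
  set T : ℕ → ℝ := fun j => ∑ k ∈ Finset.Ico j n, ((k:ℝ) * ((n:ℝ) + 1 - k))⁻¹ with hT
  have hvn : v n = c * lamE / (lam * (c + n)) := by
    have h := hv n (by omega) le_rfl
    rw [h]
    have hz : (n:ℝ) - n = 0 := by ring
    rw [hz]
    field_simp
    ring
  have hvn0 : 0 ≤ v n := by
    rw [hvn]; positivity
  have key : ∀ d : ℕ, ∀ j : ℕ, 1 ≤ j → j + d = n →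
      0 ≤ v j ∧ v j ≤ lamE * c / lam * T j + v n := by
    intro d
    induction d with
    | zero =>
      intro j hj hjn
      simp only [Nat.add_zero] at hjn
      subst hjn
      refine ⟨hvn0, ?_⟩
      have : T j = 0 := by simp [hT]
      rw [this]
      simp
    | succ d ih =>
      intro j hj hjn
      have hjlt : j < n := by omega
      obtain ⟨ih0, ih1⟩ := ih (j + 1) (by omega) (by omega)
      have hjr1 : (1:ℝ) ≤ (j:ℝ) := by exact_mod_cast hj
      have hjrn : (j:ℝ) + 1 ≤ (n:ℝ) := by exact_mod_cast hjlt
      set A : ℝ := (j : ℝ) * ((n : ℝ) - j) * (lam / ((n : ℝ) - 1) + lam / c) with hA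
      set B : ℝ := (j : ℝ) * lam / n + (j : ℝ) * lam / c with hB
      have hApos : 0 < A := by
        apply mul_pos (mul_pos (by linarith) (by linarith))
        have h1 : 0 < lam / ((n:ℝ) - 1) := by positivity
        have h2 : 0 < lam / c := by positivity
        linarith
      have hBpos : 0 < B := by
        have h1 : 0 < (j:ℝ) * lam / n := by positivity
        have h2 : 0 < (j:ℝ) * lam / c := by positivity
        rw [hB]; linarith
      have hS : 0 < B + A := by linarith
      have heq : v j = (lamE + A * v (j + 1)) / (B + A) := hv j hj hjlt.le
      have h0 : 0 ≤ v j := by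
        rw [heq]
        apply div_nonneg _ hS.le
        have := mul_nonneg hApos.le ih0
        linarith
      have h1 : v j ≤ lamE / (B + A) + v (j + 1) := by
        rw [heq]
        rw [div_le_iff₀ hS]
        have hx : 0 ≤ B * v (j + 1) := mul_nonneg hBpos.le ih0
        have : (lamE / (B + A) + v (j + 1)) * (B + A) = lamE + (B + A) * v (j + 1) := by
          field_simp
        rw [this]
        nlinarith
      set D : ℝ := (j:ℝ) * ((n:ℝ) + 1 - (j:ℝ)) with hD
      have hDpos : 0 < D := by
        apply mul_pos (by linarith) (by linarith)
      have hSD : lam / c * D ≤ B + A := by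
        have e1 : 0 ≤ (j:ℝ) * lam / n := by positivity
        have e2 : 0 ≤ (j:ℝ) * ((n:ℝ) - j) * (lam / ((n:ℝ) - 1)) := by
          apply mul_nonneg (mul_nonneg (by linarith) (by linarith))
          positivity
        have : lam / c * D = (j:ℝ) * lam / c + (j:ℝ) * ((n:ℝ) - j) * (lam / c) := by
          rw [hD]; field_simp; ring
        rw [this, hB, hA]
        nlinarith
      have h2 : lamE / (B + A) ≤ lamE * c / lam * D⁻¹ := by
        have hcd : 0 < lam / c * D := by positivity
        have step : lamE / (B + A) ≤ lamE / (lam / c * D) := by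
          gcongr
        refine step.trans_eq ?_
        field_simp
      have h3 : T j = D⁻¹ + T (j + 1) := by
        simp only [hT]
        rw [Finset.sum_eq_sum_Ico_succ_bot hjlt]
      have h4 : lamE * c / lam * T j = lamE * c / lam * D⁻¹ + lamE * c / lam * T (j + 1) := by
        rw [h3]; ring
      exact ⟨h0, by linarith⟩
  obtain ⟨-, hkey⟩ := key (n - 1) 1 le_rfl (by omega)
  -- bound T 1
  have hHar : ∀ s : Finset ℕ, s ⊆ Finset.Icc 1 n → ∑ k ∈ s, ((k:ℝ))⁻¹ ≤ 1 + Real.log n := by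
    intro s hs
    have h1 : ∑ k ∈ s, ((k:ℝ))⁻¹ ≤ ∑ k ∈ Finset.Icc 1 n, ((k:ℝ))⁻¹ := by
      apply Finset.sum_le_sum_of_subset_of_nonneg hs
      intro i _ _; positivity
    have h2 : ∑ k ∈ Finset.Icc 1 n, ((k:ℝ))⁻¹ = ((harmonic n : ℚ) : ℝ) := by
      rw [harmonic_eq_sum_Icc]
      push_cast
      rfl
    calc ∑ k ∈ s, ((k:ℝ))⁻¹ ≤ ((harmonic n : ℚ) : ℝ) := by rw [← h2]; exact h1
      _ ≤ 1 + Real.log n := harmonic_le_one_add_log n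
  have hS1 : ∑ k ∈ Finset.Ico 1 n, ((k:ℝ))⁻¹ ≤ 1 + Real.log n := by
    apply hHar
    intro x hx
    simp only [Finset.mem_Ico] at hx
    simp only [Finset.mem_Icc]
    omega
  have hS2 : ∑ k ∈ Finset.Ico 1 n, (((n:ℝ) + 1 - k))⁻¹ ≤ 1 + Real.log n := by
    have hre : ∑ k ∈ Finset.Ico 1 n, (((n:ℝ) + 1 - k))⁻¹
        = ∑ k ∈ Finset.Ico 2 (n + 1), ((k:ℝ))⁻¹ := by
      apply Finset.sum_nbij' (fun k => n + 1 - k) (fun k => n + 1 - k)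
      · intro a ha; simp only [Finset.mem_Ico] at *; omega
      · intro a ha; simp only [Finset.mem_Ico] at *; omega
      · intro a ha; simp only [Finset.mem_Ico] at ha; omega
      · intro a ha; simp only [Finset.mem_Ico] at ha; omega
      · intro a ha
        simp only [Finset.mem_Ico] at ha
        congr 1
        have : ((n + 1 - a : ℕ) : ℝ) = (n:ℝ) + 1 - a := by
          have : a ≤ n + 1 := by omega
          push_cast [Nat.cast_sub this]
          ring
        rw [this]
    rw [hre]
    apply hHar
    intro x hx
    simp only [Finset.mem_Ico] at hx
    simp only [Finset.mem_Icc]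
    omega
  have hT1 : T 1 ≤ (1 / n) * ((1 + Real.log n) + (1 + Real.log n)) := by
    have hterm : ∀ k ∈ Finset.Ico 1 n,
        ((k:ℝ) * ((n:ℝ) + 1 - k))⁻¹ ≤ (1 / n) * (((k:ℝ))⁻¹ + (((n:ℝ) + 1 - k))⁻¹) := by
      intro k hk
      simp only [Finset.mem_Ico] at hk
      have hk1 : (1:ℝ) ≤ (k:ℝ) := by exact_mod_cast hk.1
      have hkn : (k:ℝ) + 1 ≤ (n:ℝ) := by exact_mod_cast hk.2
      have hp1 : (0:ℝ) < (k:ℝ) := by linarith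
      have hp2 : (0:ℝ) < (n:ℝ) + 1 - k := by linarith
      rw [div_mul_eq_mul_div, le_div_iff₀ hnpos, ← sub_nonneg]
      have e : 1 * (((k:ℝ))⁻¹ + (((n:ℝ) + 1 - k))⁻¹) - ((k:ℝ) * ((n:ℝ) + 1 - k))⁻¹ * (n:ℝ)
          = ((k:ℝ) * ((n:ℝ) + 1 - k))⁻¹ * 1 := by
        field_simp
        ring
      rw [e]
      positivity
    calc T 1 ≤ ∑ k ∈ Finset.Ico 1 n, (1 / (n:ℝ)) * (((k:ℝ))⁻¹ + (((n:ℝ) + 1 - k))⁻¹) :=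
          Finset.sum_le_sum hterm
      _ = (1 / n) * (∑ k ∈ Finset.Ico 1 n, ((k:ℝ))⁻¹
            + ∑ k ∈ Finset.Ico 1 n, (((n:ℝ) + 1 - k))⁻¹) := by
          rw [← Finset.mul_sum, Finset.sum_add_distrib]
      _ ≤ (1 / n) * ((1 + Real.log n) + (1 + Real.log n)) := by
          apply mul_le_mul_of_nonneg_left _ (by positivity)
          exact add_le_add hS1 hS2
  have hcoef : 0 ≤ lamE * c / lam := by positivity
  have hfin : lamE * c / lam * T 1 ≤ 2 * c * lamE * (Real.log n + 1) / (lam * n) := by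
    calc lamE * c / lam * T 1 ≤ lamE * c / lam * ((1 / n) * ((1 + Real.log n) + (1 + Real.log n))) :=
          mul_le_mul_of_nonneg_left hT1 hcoef
      _ = 2 * c * lamE * (Real.log n + 1) / (lam * n) := by
          have hln : lam ≠ 0 := ne_of_gt hlam
          have hnn : (n:ℝ) ≠ 0 := ne_of_gt hnpos
          generalize Real.log (n:ℝ) = L
          field_simp
          ring
  calc v 1 ≤ lamE * c / lam * T 1 + v n := hkey
    _ ≤ 2 * c * lamE * (Real.log n + 1) / (lam * n) + c * lamE / (lam * (c + n)) := by
        rw [hvn]; linarith
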